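/- arXiv:2102.08796 — 4 statements merged into one kernel-verified Lean document; each statement's English description precedes it below -/
import Mathlib

section
/- The subgroup of GL(4,ℝ) generated by the two matrices σ1 = ρ0ρ1ρ2ρ3 and σ2 = ρ3ρ2ρ1ρ3 has order 48. -/
open Matrix

/-- The general linear group of `4 × 4` real matrices. -/
abbrev GL4 := GL (Fin 4) ℝ

/-- rho0 : the reflection `ρ0 = diag(−1,1,1,1)`. -/
def rho0 : GL4 :=
  ⟨!![-1,0,0,0; 0,1,0,0; 0,0,1,0; 0,0,0,1],
   !![-1,0,0,0; 0,1,0,0; 0,0,1,0; 0,0,0,1],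
   by ext i j; fin_cases i <;> fin_cases j <;>
      simp [Matrix.mul_apply, Fin.sum_univ_four, Matrix.one_apply, Matrix.vecHead, Matrix.vecTail],
   by ext i j; fin_cases i <;> fin_cases j <;>
      simp [Matrix.mul_apply, Fin.sum_univ_four, Matrix.one_apply, Matrix.vecHead, Matrix.vecTail]⟩

/-- rho1 : the permutation matrix transposing coordinates 1 and 2. -/
def rho1 : GL4 :=
  ⟨!![0,1,0,0; 1,0,0,0; 0,0,1,0; 0,0,0,1],
   !![0,1,0,0; 1,0,0,0; 0,0,1,0; 0,0,0,1],
   by ext i j; fin_cases i <;> fin_cases j <;>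
      simp [Matrix.mul_apply, Fin.sum_univ_four, Matrix.one_apply, Matrix.vecHead, Matrix.vecTail],
   by ext i j; fin_cases i <;> fin_cases j <;>
      simp [Matrix.mul_apply, Fin.sum_univ_four, Matrix.one_apply, Matrix.vecHead, Matrix.vecTail]⟩

/-- rho2 : the permutation matrix transposing coordinates 2 and 3. -/
def rho2 : GL4 :=
  ⟨!![1,0,0,0; 0,0,1,0; 0,1,0,0; 0,0,0,1],
   !![1,0,0,0; 0,0,1,0; 0,1,0,0; 0,0,0,1],
   by ext i j; fin_cases i <;> fin_cases j <;>
      simp [Matrix.mul_apply, Fin.sum_univ_four, Matrix.one_apply, Matrix.vecHead, Matrix.vecTail],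
   by ext i j; fin_cases i <;> fin_cases j <;>
      simp [Matrix.mul_apply, Fin.sum_univ_four, Matrix.one_apply, Matrix.vecHead, Matrix.vecTail]⟩

/-- rho3 : the permutation matrix transposing coordinates 3 and 4. -/
def rho3 : GL4 :=
  ⟨!![1,0,0,0; 0,1,0,0; 0,0,0,1; 0,0,1,0],
   !![1,0,0,0; 0,1,0,0; 0,0,0,1; 0,0,1,0],
   by ext i j; fin_cases i <;> fin_cases j <;>
      simp [Matrix.mul_apply, Fin.sum_univ_four, Matrix.one_apply, Matrix.vecHead, Matrix.vecTail],
   by ext i j; fin_cases i <;> fin_cases j <;>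
      simp [Matrix.mul_apply, Fin.sum_univ_four, Matrix.one_apply, Matrix.vecHead, Matrix.vecTail]⟩


/-- `σ1 = ρ0 ρ1 ρ2 ρ3`. -/
def sigma1 : GL4 := rho0 * rho1 * rho2 * rho3

/-- `σ2 = ρ3 ρ2 ρ1 ρ3`. -/
def sigma2 : GL4 := rho3 * rho2 * rho1 * rho3

/-- `σ3 = ρ2 ρ3`. -/
def sigma3 : GL4 := rho2 * rho3


section Aux

/-- Integer versions of the generators. -/
def zr0 : GL (Fin 4) ℤ :=
  ⟨!![-1,0,0,0; 0,1,0,0; 0,0,1,0; 0,0,0,1],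
   !![-1,0,0,0; 0,1,0,0; 0,0,1,0; 0,0,0,1], by decide, by decide⟩

def zr1 : GL (Fin 4) ℤ :=
  ⟨!![0,1,0,0; 1,0,0,0; 0,0,1,0; 0,0,0,1],
   !![0,1,0,0; 1,0,0,0; 0,0,1,0; 0,0,0,1], by decide, by decide⟩

def zr2 : GL (Fin 4) ℤ :=
  ⟨!![1,0,0,0; 0,0,1,0; 0,1,0,0; 0,0,0,1],
   !![1,0,0,0; 0,0,1,0; 0,1,0,0; 0,0,0,1], by decide, by decide⟩

def zr3 : GL (Fin 4) ℤ :=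
  ⟨!![1,0,0,0; 0,1,0,0; 0,0,0,1; 0,0,1,0],
   !![1,0,0,0; 0,1,0,0; 0,0,0,1; 0,0,1,0], by decide, by decide⟩

def zs1 : GL (Fin 4) ℤ := zr0 * zr1 * zr2 * zr3
def zs2 : GL (Fin 4) ℤ := zr3 * zr2 * zr1 * zr3

def wprod (l : List Bool) : GL (Fin 4) ℤ :=
  (l.map fun b => if b then zs1 else zs2).prod

def wordList : List (List Bool) :=
  [[], [true], [false], [true,true], [true,false], [false,true], [false,false], [true,true,true], [true,true,false], [true,false,false], [false,true,true], [false,true,false], [false,false,true], [true,true,true,true], [true,true,true,false], [true,true,false,false], [true,false,false,true], [false,true,true,true], [false,true,true,false], [false,true,false,false], [false,false,true,true], [false,false,true,false], [true,true,true,true,true], [true,true,true,true,false], [true,true,true,false,false], [true,true,false,false,true], [true,false,false,true,true], [true,false,false,true,false], [false,true,true,true,false], [false,true,true,false,false], [false,true,false,false,true], [false,false,true,true,true], [false,false,true,true,false], [false,false,true,false,false], [true,true,true,true,true,true], [true,true,true,true,false,false], [true,true,true,false,false,true], [true,true,false,false,true,false], [true,false,false,true,true,true], [true,false,false,true,true,false],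 [true,false,false,true,false,false], [false,true,true,true,false,false], [false,true,true,false,false,true], [false,true,false,false,true,true], [false,false,true,true,true,false], [false,false,true,true,false,false], [false,false,true,false,false,true], [true,true,true,false,false,true,false]]

def L : List (GL (Fin 4) ℤ) := wordList.map wprod

lemma mem_closure_of_mem_L : ∀ x ∈ L, x ∈ Subgroup.closure ({zs1, zs2} : Set (GL (Fin 4) ℤ)) := by
  intro x hx
  simp only [L, List.mem_map] at hx
  obtain ⟨l, -, rfl⟩ := hx
  refine Subgroup.list_prod_mem _ ?_
  intro y hy
  simp only [List.mem_map] at hy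
  obtain ⟨b, -, rfl⟩ := hy
  cases b
  · exact Subgroup.subset_closure (by simp)
  · exact Subgroup.subset_closure (by simp)

lemma one_mem_L : (1 : GL (Fin 4) ℤ) ∈ L := by decide

lemma stepA : ∀ y ∈ L, zs1 * y ∈ L := by decide
lemma stepB : ∀ y ∈ L, zs2 * y ∈ L := by decide
lemma stepA' : ∀ y ∈ L, zs1⁻¹ * y ∈ L := by decide
lemma stepB' : ∀ y ∈ L, zs2⁻¹ * y ∈ L := by decide

lemma list_prod_mem_L : ∀ l : List (GL (Fin 4) ℤ),
    (∀ y ∈ l, y ∈ ({zs1, zs2} : Set (GL (Fin 4) ℤ)) ∪ ({zs1, zs2} : Set (GL (Fin 4) ℤ))⁻¹) →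
    l.prod ∈ L := by
  intro l
  induction l with
  | nil => intro _; simpa using one_mem_L
  | cons g t ih =>
    intro h
    have ht : t.prod ∈ L := ih fun y hy => h y (List.mem_cons_of_mem _ hy)
    have hg := h g (List.mem_cons_self)
    rw [List.prod_cons]
    rcases hg with hg | hg
    · rcases hg with rfl | hg
      · exact stepA _ ht
      · rcases hg with rfl; exact stepB _ ht
    · simp only [Set.mem_inv, Set.mem_insert_iff, Set.mem_singleton_iff] at hg
      rcases hg with hg | hg
      · rw [show g = zs1⁻¹ from by rw [← hg, inv_inv]]; exact stepA' _ ht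
      · rw [show g = zs2⁻¹ from by rw [← hg, inv_inv]]; exact stepB' _ ht

lemma closure_z_eq : (Subgroup.closure ({zs1, zs2} : Set (GL (Fin 4) ℤ)) : Set (GL (Fin 4) ℤ))
    = {x | x ∈ L} := by
  apply le_antisymm
  · intro x hx
    have hx' : x ∈ Submonoid.closure (({zs1, zs2} : Set (GL (Fin 4) ℤ)) ∪
        ({zs1, zs2} : Set (GL (Fin 4) ℤ))⁻¹) := by
      rw [← Subgroup.closure_toSubmonoid]
      exact hx
    obtain ⟨l, hl, rfl⟩ := Submonoid.exists_list_of_mem_closure hx'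
    exact list_prod_mem_L l hl
  · exact fun x hx => mem_closure_of_mem_L x hx

set_option maxRecDepth 100000 in
lemma card_L : Nat.card (Subgroup.closure ({zs1, zs2} : Set (GL (Fin 4) ℤ))) = 48 := by
  have e : (Subgroup.closure ({zs1, zs2} : Set (GL (Fin 4) ℤ)) : Set (GL (Fin 4) ℤ))
      = ↑L.toFinset := by
    rw [closure_z_eq]; ext x; simp
  calc Nat.card (Subgroup.closure ({zs1, zs2} : Set (GL (Fin 4) ℤ)))
      = Nat.card (↑L.toFinset : Set (GL (Fin 4) ℤ)) := Nat.card_congr (Equiv.setCongr e)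
    _ = L.toFinset.card := by rw [Nat.card_coe_set_eq, Set.ncard_coe_finset]
    _ = 48 := by decide


/-- The coercion homomorphism from integer to real invertible matrices. -/
def phi : GL (Fin 4) ℤ →* GL4 :=
  Units.map ((Int.castRingHom ℝ).mapMatrix : Matrix (Fin 4) (Fin 4) ℤ →+* Matrix (Fin 4) (Fin 4) ℝ).toMonoidHom

lemma phi_injective : Function.Injective phi := by
  apply Units.map_injective
  intro A B h
  ext i j
  have h2 : ((A i j : ℤ) : ℝ) = ((B i j : ℤ) : ℝ) := by
    have := congrArg (fun M => M i j) h
    simpa [RingHom.mapMatrix_apply, Matrix.map_apply] using this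
  exact_mod_cast h2

lemma phi_zr0 : phi zr0 = rho0 := by
  apply Units.ext
  show (Matrix.map !![(-1:ℤ),0,0,0; 0,1,0,0; 0,0,1,0; 0,0,0,1] ((Int.cast : ℤ → ℝ))) = !![(-1:ℝ),0,0,0; 0,1,0,0; 0,0,1,0; 0,0,0,1]
  ext i j
  fin_cases i <;> fin_cases j <;>
    norm_num [Matrix.map_apply, Matrix.vecHead, Matrix.vecTail]

lemma phi_zr1 : phi zr1 = rho1 := by
  apply Units.ext
  show (Matrix.map !![(0:ℤ),1,0,0; 1,0,0,0; 0,0,1,0; 0,0,0,1] ((Int.cast : ℤ → ℝ))) = !![(0:ℝ),1,0,0; 1,0,0,0; 0,0,1,0; 0,0,0,1]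
  ext i j
  fin_cases i <;> fin_cases j <;>
    norm_num [Matrix.map_apply, Matrix.vecHead, Matrix.vecTail]

lemma phi_zr2 : phi zr2 = rho2 := by
  apply Units.ext
  show (Matrix.map !![(1:ℤ),0,0,0; 0,0,1,0; 0,1,0,0; 0,0,0,1] ((Int.cast : ℤ → ℝ))) = !![(1:ℝ),0,0,0; 0,0,1,0; 0,1,0,0; 0,0,0,1]
  ext i j
  fin_cases i <;> fin_cases j <;>
    norm_num [Matrix.map_apply, Matrix.vecHead, Matrix.vecTail]

lemma phi_zr3 : phi zr3 = rho3 := by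
  apply Units.ext
  show (Matrix.map !![(1:ℤ),0,0,0; 0,1,0,0; 0,0,0,1; 0,0,1,0] ((Int.cast : ℤ → ℝ))) = !![(1:ℝ),0,0,0; 0,1,0,0; 0,0,0,1; 0,0,1,0]
  ext i j
  fin_cases i <;> fin_cases j <;>
    norm_num [Matrix.map_apply, Matrix.vecHead, Matrix.vecTail]

lemma phi_zs1 : phi zs1 = sigma1 := by
  simp only [zs1, sigma1, _root_.map_mul, phi_zr0, phi_zr1, phi_zr2, phi_zr3]

lemma phi_zs2 : phi zs2 = sigma2 := by
  simp only [zs2, sigma2, _root_.map_mul, phi_zr1, phi_zr2, phi_zr3]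

end Aux

/-- The subgroup of `GL(4,ℝ)` generated by `σ1` and `σ2` has order 48. -/
theorem closure_sigma1_sigma2_card :
    Nat.card (Subgroup.closure {sigma1, sigma2} : Subgroup GL4) = 48 := by
  have hmap : (Subgroup.closure ({zs1, zs2} : Set (GL (Fin 4) ℤ))).map phi
      = Subgroup.closure {sigma1, sigma2} := by
    rw [MonoidHom.map_closure]
    congr 1
    rw [Set.image_insert_eq, Set.image_singleton, phi_zs1, phi_zs2]
  rw [← hmap]
  rw [Nat.card_congr ((Subgroup.closure ({zs1, zs2} : Set (GL (Fin 4) ℤ))).equivMapOfInjective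
    phi phi_injective).toEquiv.symm]
  exact card_L
end

section
/- There exists an automorphism τ of the subgroup Γ = ⟨σ1, σ2⟩ of GL(4,ℝ) with τ(σ1) = σ1⁻¹ and τ(σ2) = σ1²σ2, and this automorphism is an involution (τ² = id and τ ≠ id). (This shows the map M of type {8,3} is abstractly regular.) -/
open Matrix

lemma sigma1_mem : sigma1 ∈ Subgroup.closure ({sigma1, sigma2} : Set GL4) :=
  Subgroup.subset_closure (by simp)

lemma sigma2_mem : sigma2 ∈ Subgroup.closure ({sigma1, sigma2} : Set GL4) :=
  Subgroup.subset_closure (by simp)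


set_option maxHeartbeats 1000000 in
/-- The conjugating matrix `g` with `g² = 3·I`. -/
noncomputable def gmat : GL4 :=
  ⟨!![-1,0,-1,1; 0,-1,1,1; -1,1,1,0; 1,1,0,1],
   (1/3 : ℝ) • !![-1,0,-1,1; 0,-1,1,1; -1,1,1,0; 1,1,0,1],
   by ext i j; fin_cases i <;> fin_cases j <;>
      simp [Matrix.mul_apply, Fin.sum_univ_four, Matrix.one_apply, Matrix.vecHead,
        Matrix.vecTail] <;> norm_num,
   by ext i j; fin_cases i <;> fin_cases j <;>
      simp [Matrix.mul_apply, Fin.sum_univ_four, Matrix.one_apply, Matrix.vecHead,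
        Matrix.vecTail] <;> norm_num⟩

lemma gmat_val : (gmat : Matrix (Fin 4) (Fin 4) ℝ) =
    !![-1,0,-1,1; 0,-1,1,1; -1,1,1,0; 1,1,0,1] := rfl

lemma gmat_inv_val : ((gmat⁻¹ : GL4) : Matrix (Fin 4) (Fin 4) ℝ) =
    (1/3 : ℝ) • !![-1,0,-1,1; 0,-1,1,1; -1,1,1,0; 1,1,0,1] := rfl

set_option maxHeartbeats 1000000 in
lemma sigma1_val : (sigma1 : Matrix (Fin 4) (Fin 4) ℝ) =
    !![0,0,0,-1; 1,0,0,0; 0,1,0,0; 0,0,1,0] := by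
  show (rho0.val * rho1.val * rho2.val * rho3.val) = _
  rw [show rho0.val = !![-1,0,0,0; 0,1,0,0; 0,0,1,0; 0,0,0,1] from rfl,
    show rho1.val = !![0,1,0,0; 1,0,0,0; 0,0,1,0; 0,0,0,1] from rfl,
    show rho2.val = !![1,0,0,0; 0,0,1,0; 0,1,0,0; 0,0,0,1] from rfl,
    show rho3.val = !![1,0,0,0; 0,1,0,0; 0,0,0,1; 0,0,1,0] from rfl]
  ext i j
  fin_cases i <;> fin_cases j <;>
    simp [Matrix.mul_apply, Fin.sum_univ_four, Matrix.vecHead, Matrix.vecTail]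

set_option maxHeartbeats 1000000 in
lemma sigma2_val : (sigma2 : Matrix (Fin 4) (Fin 4) ℝ) =
    !![0,1,0,0; 0,0,0,1; 0,0,1,0; 1,0,0,0] := by
  show (rho3.val * rho2.val * rho1.val * rho3.val) = _
  rw [show rho1.val = !![0,1,0,0; 1,0,0,0; 0,0,1,0; 0,0,0,1] from rfl,
    show rho2.val = !![1,0,0,0; 0,0,1,0; 0,1,0,0; 0,0,0,1] from rfl,
    show rho3.val = !![1,0,0,0; 0,1,0,0; 0,0,0,1; 0,0,1,0] from rfl]
  ext i j
  fin_cases i <;> fin_cases j <;>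
    simp [Matrix.mul_apply, Fin.sum_univ_four, Matrix.vecHead, Matrix.vecTail]

set_option maxHeartbeats 1000000 in
lemma gmat_sq_comm (x : GL4) : gmat * gmat * x = x * (gmat * gmat) := by
  have h : (gmat.val * gmat.val) = (3 : ℝ) • (1 : Matrix (Fin 4) (Fin 4) ℝ) := by
    rw [gmat_val]
    ext i j
    fin_cases i <;> fin_cases j <;>
      simp [Matrix.mul_apply, Fin.sum_univ_four, Matrix.one_apply, Matrix.vecHead,
        Matrix.vecTail] <;> norm_num
  ext1
  simp only [Units.val_mul, mul_assoc]
  rw [← mul_assoc gmat.val, h]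
  simp [Matrix.smul_mul, Matrix.mul_smul]

set_option maxHeartbeats 1000000 in
lemma conj_sigma1 : gmat * sigma1 * gmat⁻¹ = sigma1⁻¹ := by
  symm
  apply inv_eq_of_mul_eq_one_left
  ext1
  rw [Units.val_mul, Units.val_mul, Units.val_mul, gmat_val, gmat_inv_val, sigma1_val,
    Units.val_one]
  ext i j
  fin_cases i <;> fin_cases j <;>
    simp [Matrix.mul_apply, Fin.sum_univ_four, Matrix.one_apply, Matrix.vecHead,
      Matrix.vecTail] <;> norm_num

set_option maxHeartbeats 1000000 in
lemma conj_sigma2 : gmat * sigma2 * gmat⁻¹ = sigma1 ^ 2 * sigma2 := by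
  have h : gmat * sigma2 = sigma1 ^ 2 * sigma2 * gmat := by
    ext1
    rw [Units.val_mul, Units.val_mul, Units.val_mul, Units.val_pow_eq_pow_val, gmat_val,
      sigma1_val, sigma2_val, pow_two]
    ext i j
    fin_cases i <;> fin_cases j <;>
      simp [Matrix.mul_apply, Fin.sum_univ_four, Matrix.vecHead, Matrix.vecTail] <;> norm_num
  rw [h, mul_assoc, mul_inv_cancel, mul_one]

lemma sigma1_ne_inv : sigma1 ≠ sigma1⁻¹ := by
  intro h
  have h2 : sigma1 * sigma1 = 1 := by
    nth_rewrite 2 [h]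
    simp
  have h3 := congrArg (fun u : GL4 => (u.val : Matrix (Fin 4) (Fin 4) ℝ) 0 0) h2
  simp only [Units.val_mul, Units.val_one, sigma1_val] at h3
  norm_num [Matrix.mul_apply, Fin.sum_univ_four, Matrix.one_apply, Matrix.vecHead,
    Matrix.vecTail] at h3
  simp [Matrix.cons_val] at h3

set_option maxHeartbeats 1000000 in
lemma map_eq :
    (Subgroup.closure ({sigma1, sigma2} : Set GL4)).map
      (MulAut.conj gmat).toMonoidHom = Subgroup.closure {sigma1, sigma2} := by
  rw [MonoidHom.map_closure]
  have himg : (MulAut.conj gmat).toMonoidHom '' {sigma1, sigma2} =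
      {sigma1⁻¹, sigma1 ^ 2 * sigma2} := by
    rw [Set.image_insert_eq, Set.image_singleton]
    have e1 : (MulAut.conj gmat).toMonoidHom sigma1 = sigma1⁻¹ := by
      simpa [MulAut.conj_apply, mul_assoc] using conj_sigma1
    have e2 : (MulAut.conj gmat).toMonoidHom sigma2 = sigma1 ^ 2 * sigma2 := by
      simpa [MulAut.conj_apply, mul_assoc] using conj_sigma2
    rw [e1, e2]
  rw [himg]
  apply le_antisymm
  · rw [Subgroup.closure_le]
    rintro x (rfl | rfl)
    · exact inv_mem sigma1_mem
    · exact mul_mem (pow_mem sigma1_mem 2) sigma2_mem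
  · rw [Subgroup.closure_le]
    have h1 : sigma1⁻¹ ∈ Subgroup.closure ({sigma1⁻¹, sigma1 ^ 2 * sigma2} : Set GL4) :=
      Subgroup.subset_closure (by simp)
    have h2 : sigma1 ^ 2 * sigma2 ∈
        Subgroup.closure ({sigma1⁻¹, sigma1 ^ 2 * sigma2} : Set GL4) :=
      Subgroup.subset_closure (by simp)
    rintro x (rfl | rfl)
    · simpa using inv_mem h1
    · have key : sigma1⁻¹ * sigma1⁻¹ * (sigma1 ^ 2 * sigma2) = sigma2 := by
        simp [pow_two, mul_assoc]
      have h3 := mul_mem (mul_mem h1 h1) h2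
      rwa [key] at h3

set_option maxHeartbeats 1000000 in
/-- There is an involutory automorphism `τ` of `Γ = ⟨σ1, σ2⟩` with `τ(σ1) = σ1⁻¹`
and `τ(σ2) = σ1²σ2`; so the map `M` of type `{8,3}` is abstractly regular. -/
theorem map_is_abstractly_regular :
    ∃ τ : (Subgroup.closure {sigma1, sigma2} : Subgroup GL4) ≃*
        (Subgroup.closure {sigma1, sigma2} : Subgroup GL4),
      τ ⟨sigma1, sigma1_mem⟩ = ⟨sigma1⁻¹, inv_mem sigma1_mem⟩ ∧
      τ ⟨sigma2, sigma2_mem⟩ = ⟨sigma1 ^ 2 * sigma2, mul_mem (pow_mem sigma1_mem 2) sigma2_mem⟩ ∧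
      (∀ x, τ (τ x) = x) ∧ τ ≠ MulEquiv.refl _ := by

  refine ⟨((MulAut.conj gmat).subgroupMap (Subgroup.closure {sigma1, sigma2})).trans
    (MulEquiv.subgroupCongr (show Subgroup.map (MulAut.conj gmat : GL4 →* GL4) _ = _ from map_eq)), ?_, ?_, ?_, ?_⟩
  · apply Subtype.ext
    rw [MulEquiv.trans_apply, MulEquiv.subgroupCongr_apply, MulEquiv.coe_subgroupMap_apply]
    simpa [mul_assoc] using conj_sigma1
  · apply Subtype.ext
    rw [MulEquiv.trans_apply, MulEquiv.subgroupCongr_apply, MulEquiv.coe_subgroupMap_apply]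
    simpa [mul_assoc] using conj_sigma2
  · intro x
    apply Subtype.ext
    rw [MulEquiv.trans_apply, MulEquiv.subgroupCongr_apply, MulEquiv.coe_subgroupMap_apply,
      MulEquiv.trans_apply, MulEquiv.subgroupCongr_apply, MulEquiv.coe_subgroupMap_apply]
    show gmat * (gmat * (x : GL4) * gmat⁻¹) * gmat⁻¹ = (x : GL4)
    calc gmat * (gmat * (x : GL4) * gmat⁻¹) * gmat⁻¹
        = gmat * gmat * (x : GL4) * (gmat * gmat)⁻¹ := by
          rw [_root_.mul_inv_rev]; group
      _ = (x : GL4) * (gmat * gmat) * (gmat * gmat)⁻¹ := by rw [gmat_sq_comm]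
      _ = (x : GL4) := by group
  · intro h
    have h1 := congrArg (fun f : _ ≃* _ => ((f ⟨sigma1, sigma1_mem⟩ :
        (Subgroup.closure {sigma1, sigma2} : Subgroup GL4)) : GL4)) h
    simp only [MulEquiv.refl_apply, MulEquiv.trans_apply, MulEquiv.subgroupCongr_apply,
      MulEquiv.coe_subgroupMap_apply] at h1
    have h2 : gmat * sigma1 * gmat⁻¹ = sigma1 := by simpa [mul_assoc] using h1
    rw [conj_sigma1] at h2
    exact sigma1_ne_inv h2.symm
end

section
/- Let a = σ1⁻¹σ2σ1⁻¹ and b = σ2σ1⁴ in GL(4,ℝ). Then a³ = b³ = (ab)² = −I, and the subgroup ⟨a, b⟩ generated by a and b is a normal subgroup of Γ = ⟨σ1, σ2⟩ of order 24 (a copy of the binary tetrahedral group ⟨3,3,2⟩). -/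
open Matrix

/-- `a = σ1⁻¹ σ2 σ1⁻¹`. -/
def aEl : GL4 := sigma1⁻¹ * sigma2 * sigma1⁻¹

/-- `b = σ2 σ1⁴`. -/
def bEl : GL4 := sigma2 * sigma1 ^ 4




noncomputable section

set_option maxHeartbeats 4000000

abbrev GL4Z := GL (Fin 4) ℤ
abbrev M4Z := Matrix (Fin 4) (Fin 4) ℤ

def mkZ (A B : M4Z) (h1 : A * B = 1) (h2 : B * A = 1) : GL4Z := ⟨A, B, h1, h2⟩

def n0 : GL4Z := mkZ !![-1, 0, 0, 0; 0, -1, 0, 0; 0, 0, -1, 0; 0, 0, 0, -1] !![-1, 0, 0, 0; 0, -1, 0, 0; 0, 0, -1, 0; 0, 0, 0, -1] (by decide) (by decide)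
def n1 : GL4Z := mkZ !![-1, 0, 0, 0; 0, 0, 0, 1; 0, 1, 0, 0; 0, 0, -1, 0] !![-1, 0, 0, 0; 0, 0, 1, 0; 0, 0, 0, -1; 0, 1, 0, 0] (by decide) (by decide)
def n2 : GL4Z := mkZ !![-1, 0, 0, 0; 0, 0, 1, 0; 0, 0, 0, -1; 0, 1, 0, 0] !![-1, 0, 0, 0; 0, 0, 0, 1; 0, 1, 0, 0; 0, 0, -1, 0] (by decide) (by decide)
def n3 : GL4Z := mkZ !![0, -1, 0, 0; 0, 0, 0, -1; 0, 0, -1, 0; -1, 0, 0, 0] !![0, 0, 0, -1; -1, 0, 0, 0; 0, 0, -1, 0; 0, -1, 0, 0] (by decide) (by decide)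
def n4 : GL4Z := mkZ !![0, -1, 0, 0; 0, 0, 1, 0; -1, 0, 0, 0; 0, 0, 0, 1] !![0, 0, -1, 0; -1, 0, 0, 0; 0, 1, 0, 0; 0, 0, 0, 1] (by decide) (by decide)
def n5 : GL4Z := mkZ !![0, -1, 0, 0; 1, 0, 0, 0; 0, 0, 0, 1; 0, 0, -1, 0] !![0, 1, 0, 0; -1, 0, 0, 0; 0, 0, 0, -1; 0, 0, 1, 0] (by decide) (by decide)
def n6 : GL4Z := mkZ !![0, 0, -1, 0; -1, 0, 0, 0; 0, 1, 0, 0; 0, 0, 0, 1] !![0, -1, 0, 0; 0, 0, 1, 0; -1, 0, 0, 0; 0, 0, 0, 1] (by decide) (by decide)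
def n7 : GL4Z := mkZ !![0, 0, -1, 0; 0, -1, 0, 0; 0, 0, 0, 1; 1, 0, 0, 0] !![0, 0, 0, 1; 0, -1, 0, 0; -1, 0, 0, 0; 0, 0, 1, 0] (by decide) (by decide)
def n8 : GL4Z := mkZ !![0, 0, -1, 0; 0, 0, 0, -1; 1, 0, 0, 0; 0, 1, 0, 0] !![0, 0, 1, 0; 0, 0, 0, 1; -1, 0, 0, 0; 0, -1, 0, 0] (by decide) (by decide)
def n9 : GL4Z := mkZ !![0, 0, 0, -1; -1, 0, 0, 0; 0, 0, -1, 0; 0, -1, 0, 0] !![0, -1, 0, 0; 0, 0, 0, -1; 0, 0, -1, 0; -1, 0, 0, 0] (by decide) (by decide)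
def n10 : GL4Z := mkZ !![0, 0, 0, -1; 0, 0, 1, 0; 0, -1, 0, 0; 1, 0, 0, 0] !![0, 0, 0, 1; 0, 0, -1, 0; 0, 1, 0, 0; -1, 0, 0, 0] (by decide) (by decide)
def n11 : GL4Z := mkZ !![0, 0, 0, -1; 0, 1, 0, 0; 1, 0, 0, 0; 0, 0, -1, 0] !![0, 0, 1, 0; 0, 1, 0, 0; 0, 0, 0, -1; -1, 0, 0, 0] (by decide) (by decide)
def n12 : GL4Z := mkZ !![0, 0, 0, 1; 0, -1, 0, 0; -1, 0, 0, 0; 0, 0, 1, 0] !![0, 0, -1, 0; 0, -1, 0, 0; 0, 0, 0, 1; 1, 0, 0, 0] (by decide) (by decide)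
def n13 : GL4Z := mkZ !![0, 0, 0, 1; 0, 0, -1, 0; 0, 1, 0, 0; -1, 0, 0, 0] !![0, 0, 0, -1; 0, 0, 1, 0; 0, -1, 0, 0; 1, 0, 0, 0] (by decide) (by decide)
def n14 : GL4Z := mkZ !![0, 0, 0, 1; 1, 0, 0, 0; 0, 0, 1, 0; 0, 1, 0, 0] !![0, 1, 0, 0; 0, 0, 0, 1; 0, 0, 1, 0; 1, 0, 0, 0] (by decide) (by decide)
def n15 : GL4Z := mkZ !![0, 0, 1, 0; 0, 0, 0, 1; -1, 0, 0, 0; 0, -1, 0, 0] !![0, 0, -1, 0; 0, 0, 0, -1; 1, 0, 0, 0; 0, 1, 0, 0] (by decide) (by decide)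
def n16 : GL4Z := mkZ !![0, 0, 1, 0; 0, 1, 0, 0; 0, 0, 0, -1; -1, 0, 0, 0] !![0, 0, 0, -1; 0, 1, 0, 0; 1, 0, 0, 0; 0, 0, -1, 0] (by decide) (by decide)
def n17 : GL4Z := mkZ !![0, 0, 1, 0; 1, 0, 0, 0; 0, -1, 0, 0; 0, 0, 0, -1] !![0, 1, 0, 0; 0, 0, -1, 0; 1, 0, 0, 0; 0, 0, 0, -1] (by decide) (by decide)
def n18 : GL4Z := mkZ !![0, 1, 0, 0; -1, 0, 0, 0; 0, 0, 0, -1; 0, 0, 1, 0] !![0, -1, 0, 0; 1, 0, 0, 0; 0, 0, 0, 1; 0, 0, -1, 0] (by decide) (by decide)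
def n19 : GL4Z := mkZ !![0, 1, 0, 0; 0, 0, -1, 0; 1, 0, 0, 0; 0, 0, 0, -1] !![0, 0, 1, 0; 1, 0, 0, 0; 0, -1, 0, 0; 0, 0, 0, -1] (by decide) (by decide)
def n20 : GL4Z := mkZ !![0, 1, 0, 0; 0, 0, 0, 1; 0, 0, 1, 0; 1, 0, 0, 0] !![0, 0, 0, 1; 1, 0, 0, 0; 0, 0, 1, 0; 0, 1, 0, 0] (by decide) (by decide)
def n21 : GL4Z := mkZ !![1, 0, 0, 0; 0, 0, -1, 0; 0, 0, 0, 1; 0, -1, 0, 0] !![1, 0, 0, 0; 0, 0, 0, -1; 0, -1, 0, 0; 0, 0, 1, 0] (by decide) (by decide)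
def n22 : GL4Z := mkZ !![1, 0, 0, 0; 0, 0, 0, -1; 0, -1, 0, 0; 0, 0, 1, 0] !![1, 0, 0, 0; 0, 0, -1, 0; 0, 0, 0, 1; 0, -1, 0, 0] (by decide) (by decide)
def n23 : GL4Z := mkZ !![1, 0, 0, 0; 0, 1, 0, 0; 0, 0, 1, 0; 0, 0, 0, 1] !![1, 0, 0, 0; 0, 1, 0, 0; 0, 0, 1, 0; 0, 0, 0, 1] (by decide) (by decide)

def fsN : Finset GL4Z := {n0, n1, n2, n3, n4, n5, n6, n7, n8, n9, n10, n11, n12, n13, n14, n15, n16, n17, n18, n19, n20, n21, n22, n23}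

def Lv : List M4Z := [!![-1, 0, 0, 0; 0, -1, 0, 0; 0, 0, -1, 0; 0, 0, 0, -1], !![-1, 0, 0, 0; 0, 0, 0, 1; 0, 1, 0, 0; 0, 0, -1, 0], !![-1, 0, 0, 0; 0, 0, 1, 0; 0, 0, 0, -1; 0, 1, 0, 0], !![0, -1, 0, 0; 0, 0, 0, -1; 0, 0, -1, 0; -1, 0, 0, 0], !![0, -1, 0, 0; 0, 0, 1, 0; -1, 0, 0, 0; 0, 0, 0, 1], !![0, -1, 0, 0; 1, 0, 0, 0; 0, 0, 0, 1; 0, 0, -1, 0], !![0, 0, -1, 0; -1, 0, 0, 0; 0, 1, 0, 0; 0, 0, 0, 1], !![0, 0, -1, 0; 0, -1, 0, 0; 0, 0, 0, 1; 1, 0, 0, 0], !![0, 0, -1, 0; 0, 0, 0, -1; 1, 0, 0, 0; 0, 1, 0, 0], !![0, 0, 0, -1; -1, 0, 0, 0; 0, 0, -1, 0; 0, -1, 0, 0], !![0, 0, 0, -1; 0, 0, 1, 0; 0, -1, 0, 0; 1, 0, 0, 0], !![0, 0, 0, -1; 0, 1, 0, 0; 1, 0, 0, 0; 0, 0, -1,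 0], !![0, 0, 0, 1; 0, -1, 0, 0; -1, 0, 0, 0; 0, 0, 1, 0], !![0, 0, 0, 1; 0, 0, -1, 0; 0, 1, 0, 0; -1, 0, 0, 0], !![0, 0, 0, 1; 1, 0, 0, 0; 0, 0, 1, 0; 0, 1, 0, 0], !![0, 0, 1, 0; 0, 0, 0, 1; -1, 0, 0, 0; 0, -1, 0, 0], !![0, 0, 1, 0; 0, 1, 0, 0; 0, 0, 0, -1; -1, 0, 0, 0], !![0, 0, 1, 0; 1, 0, 0, 0; 0, -1, 0, 0; 0, 0, 0, -1], !![0, 1, 0, 0; -1, 0, 0, 0; 0, 0, 0, -1; 0, 0, 1, 0], !![0, 1, 0, 0; 0, 0, -1, 0; 1, 0, 0, 0; 0, 0, 0, -1], !![0, 1, 0, 0; 0, 0, 0, 1; 0, 0, 1, 0; 1, 0, 0, 0], !![1, 0, 0, 0; 0, 0, -1, 0; 0, 0, 0, 1; 0, -1, 0, 0], !![1, 0, 0, 0; 0, 0, 0, -1; 0, -1, 0, 0; 0, 0, 1, 0], !![1, 0, 0, 0; 0, 1, 0, 0; 0, 0, 1, 0; 0, 0, 0, 1]]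

lemma val_inv_eq {u : GL4Z} {B : M4Z} (h : u.val * B = 1) : (u⁻¹).val = B := by
  calc (u⁻¹).val = u.inv * (u.val * B) := by rw [h, mul_one]; rfl
    _ = (u.inv * u.val) * B := by rw [mul_assoc]
    _ = B := by rw [u.inv_val, one_mul]

lemma mem_vals : ∀ u ∈ fsN, u.val ∈ Lv := by decide

lemma exists_of_val : ∀ A ∈ Lv, ∃ u ∈ fsN, u.val = A := by decide

lemma mem_fsN_iff (x : GL4Z) : x ∈ fsN ↔ x.val ∈ Lv := by
  constructor
  · exact mem_vals x
  · intro h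
    obtain ⟨u, hu, hval⟩ := exists_of_val x.val h
    rwa [← Units.ext hval]

lemma mulLv : ∀ A ∈ Lv, ∀ B ∈ Lv, A * B ∈ Lv := by decide

lemma invLv : ∀ A ∈ Lv, Aᵀ ∈ Lv ∧ A * Aᵀ = 1 := by decide

def SN : Subgroup GL4Z where
  carrier := ↑fsN
  one_mem' := by decide
  mul_mem' := by
    intro x y hx hy
    exact (mem_fsN_iff (x * y)).mpr
      (mulLv x.val ((mem_fsN_iff x).mp hx) y.val ((mem_fsN_iff y).mp hy))
  inv_mem' := by
    intro x hx
    have h := invLv x.val ((mem_fsN_iff x).mp hx)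
    have hv : (x⁻¹).val ∈ Lv := by rw [val_inv_eq h.2]; exact h.1
    exact (mem_fsN_iff _).mpr hv

lemma mem_SN_iff (x : GL4Z) : x ∈ SN ↔ x.val ∈ Lv := mem_fsN_iff x

def Zrho0 : GL4Z := mkZ !![-1,0,0,0; 0,1,0,0; 0,0,1,0; 0,0,0,1] !![-1,0,0,0; 0,1,0,0; 0,0,1,0; 0,0,0,1] (by decide) (by decide)
def Zrho1 : GL4Z := mkZ !![0,1,0,0; 1,0,0,0; 0,0,1,0; 0,0,0,1] !![0,1,0,0; 1,0,0,0; 0,0,1,0; 0,0,0,1] (by decide) (by decide)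
def Zrho2 : GL4Z := mkZ !![1,0,0,0; 0,0,1,0; 0,1,0,0; 0,0,0,1] !![1,0,0,0; 0,0,1,0; 0,1,0,0; 0,0,0,1] (by decide) (by decide)
def Zrho3 : GL4Z := mkZ !![1,0,0,0; 0,1,0,0; 0,0,0,1; 0,0,1,0] !![1,0,0,0; 0,1,0,0; 0,0,0,1; 0,0,1,0] (by decide) (by decide)

def Zsigma1 : GL4Z := Zrho0 * Zrho1 * Zrho2 * Zrho3
def Zsigma2 : GL4Z := Zrho3 * Zrho2 * Zrho1 * Zrho3
def aZ : GL4Z := Zsigma1⁻¹ * Zsigma2 * Zsigma1⁻¹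
def bZ : GL4Z := Zsigma2 * Zsigma1 ^ 4

lemma aZ_mem : aZ ∈ SN := by rw [mem_SN_iff]; decide
lemma bZ_mem : bZ ∈ SN := by rw [mem_SN_iff]; decide

lemma aZ_cube : aZ ^ 3 = (-1 : GL4Z) := by decide
lemma bZ_cube : bZ ^ 3 = (-1 : GL4Z) := by decide
lemma abZ_sq : (aZ * bZ) ^ 2 = (-1 : GL4Z) := by decide

lemma closure_le_SN : Subgroup.closure {aZ, bZ} ≤ SN := by
  rw [Subgroup.closure_le]
  intro x hx
  rcases hx with h | h
  · subst h; exact aZ_mem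
  · simp only [Set.mem_singleton_iff] at h; subst h; exact bZ_mem

lemma SN_le_closure : SN ≤ Subgroup.closure {aZ, bZ} := by
  have ha : aZ ∈ Subgroup.closure {aZ, bZ} :=
    Subgroup.subset_closure (Set.mem_insert _ _)
  have hb : bZ ∈ Subgroup.closure {aZ, bZ} :=
    Subgroup.subset_closure (Set.mem_insert_of_mem _ rfl)
  intro x hx
  have hx' : x ∈ fsN := hx
  clear hx
  fin_cases hx'
  · have h : n0 = aZ * aZ * aZ := by decide
    rw [h]; exact (mul_mem (mul_mem ha ha) ha)
  · have h : n1 = aZ := by decide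
    rw [h]; exact ha
  · have h : n2 = aZ⁻¹ := by decide
    rw [h]; exact (inv_mem ha)
  · have h : n3 = bZ := by decide
    rw [h]; exact hb
  · have h : n4 = aZ * aZ * bZ := by decide
    rw [h]; exact (mul_mem (mul_mem ha ha) hb)
  · have h : n5 = bZ⁻¹ * aZ⁻¹ := by decide
    rw [h]; exact (mul_mem (inv_mem hb) (inv_mem ha))
  · have h : n6 = bZ * bZ * aZ := by decide
    rw [h]; exact (mul_mem (mul_mem hb hb) ha)
  · have h : n7 = bZ * aZ⁻¹ := by decide
    rw [h]; exact (mul_mem hb (inv_mem ha))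
  · have h : n8 = aZ * bZ⁻¹ * aZ := by decide
    rw [h]; exact (mul_mem (mul_mem ha (inv_mem hb)) ha)
  · have h : n9 = bZ⁻¹ := by decide
    rw [h]; exact (inv_mem hb)
  · have h : n10 = bZ * aZ := by decide
    rw [h]; exact (mul_mem hb ha)
  · have h : n11 = aZ * bZ * bZ := by decide
    rw [h]; exact (mul_mem (mul_mem ha hb) hb)
  · have h : n12 = aZ * bZ⁻¹ := by decide
    rw [h]; exact (mul_mem ha (inv_mem hb))
  · have h : n13 = aZ⁻¹ * bZ⁻¹ := by decide
    rw [h]; exact (mul_mem (inv_mem ha) (inv_mem hb))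
  · have h : n14 = bZ * bZ := by decide
    rw [h]; exact (mul_mem hb hb)
  · have h : n15 = bZ * aZ⁻¹ * bZ := by decide
    rw [h]; exact (mul_mem (mul_mem hb (inv_mem ha)) hb)
  · have h : n16 = bZ * aZ * aZ := by decide
    rw [h]; exact (mul_mem (mul_mem hb ha) ha)
  · have h : n17 = bZ⁻¹ * aZ := by decide
    rw [h]; exact (mul_mem (inv_mem hb) ha)
  · have h : n18 = aZ * bZ := by decide
    rw [h]; exact (mul_mem ha hb)
  · have h : n19 = aZ⁻¹ * bZ := by decide
    rw [h]; exact (mul_mem (inv_mem ha) hb)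
  · have h : n20 = bZ⁻¹ * bZ⁻¹ := by decide
    rw [h]; exact (mul_mem (inv_mem hb) (inv_mem hb))
  · have h : n21 = aZ * aZ := by decide
    rw [h]; exact (mul_mem ha ha)
  · have h : n22 = aZ⁻¹ * aZ⁻¹ := by decide
    rw [h]; exact (mul_mem (inv_mem ha) (inv_mem ha))
  · have h : n23 = 1 := by decide
    rw [h]; exact one_mem _

lemma closure_eq_SN : Subgroup.closure {aZ, bZ} = SN :=
  le_antisymm closure_le_SN SN_le_closure

lemma s1_val : Zsigma1.val = !![0, 0, 0, -1; 1, 0, 0, 0; 0, 1, 0, 0; 0, 0, 1, 0] := by decide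
lemma s2_val : Zsigma2.val = !![0, 1, 0, 0; 0, 0, 0, 1; 0, 0, 1, 0; 1, 0, 0, 0] := by decide
lemma s1_inv_val : (Zsigma1⁻¹).val = !![0, 1, 0, 0; 0, 0, 1, 0; 0, 0, 0, 1; -1, 0, 0, 0] := val_inv_eq (by decide)
lemma s2_inv_val : (Zsigma2⁻¹).val = !![0, 0, 0, 1; 1, 0, 0, 0; 0, 0, 1, 0; 0, 1, 0, 0] := val_inv_eq (by decide)

lemma conj_s1 : ∀ A ∈ Lv, !![0, 0, 0, -1; 1, 0, 0, 0; 0, 1, 0, 0; 0, 0, 1, 0] * A * !![0, 1, 0, 0; 0, 0, 1, 0; 0, 0, 0, 1; -1, 0, 0, 0] ∈ Lv := by decide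
lemma conj_s1' : ∀ A ∈ Lv, !![0, 1, 0, 0; 0, 0, 1, 0; 0, 0, 0, 1; -1, 0, 0, 0] * A * !![0, 0, 0, -1; 1, 0, 0, 0; 0, 1, 0, 0; 0, 0, 1, 0] ∈ Lv := by decide
lemma conj_s2 : ∀ A ∈ Lv, !![0, 1, 0, 0; 0, 0, 0, 1; 0, 0, 1, 0; 1, 0, 0, 0] * A * !![0, 0, 0, 1; 1, 0, 0, 0; 0, 0, 1, 0; 0, 1, 0, 0] ∈ Lv := by decide
lemma conj_s2' : ∀ A ∈ Lv, !![0, 0, 0, 1; 1, 0, 0, 0; 0, 0, 1, 0; 0, 1, 0, 0] * A * !![0, 1, 0, 0; 0, 0, 0, 1; 0, 0, 1, 0; 1, 0, 0, 0] ∈ Lv := by decide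

lemma mem_normalizer_of_conj {g : GL4Z}
    (h1 : ∀ n ∈ SN, g * n * g⁻¹ ∈ SN)
    (h2 : ∀ n ∈ SN, g⁻¹ * n * g ∈ SN) : g ∈ Subgroup.normalizer (SN : Set GL4Z) := by
  rw [Subgroup.mem_normalizer_iff]
  intro n
  constructor
  · exact h1 n
  · intro hn
    have h := h2 _ hn
    have : g⁻¹ * (g * n * g⁻¹) * g = n := by group
    rwa [this] at h

lemma s1_mem_normalizer : Zsigma1 ∈ Subgroup.normalizer (SN : Set GL4Z) := by
  apply mem_normalizer_of_conj
  · intro n hn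
    rw [mem_SN_iff] at hn ⊢
    have : (Zsigma1 * n * Zsigma1⁻¹).val = Zsigma1.val * n.val * (Zsigma1⁻¹).val := rfl
    rw [this, s1_val, s1_inv_val]
    exact conj_s1 n.val hn
  · intro n hn
    rw [mem_SN_iff] at hn ⊢
    have : (Zsigma1⁻¹ * n * Zsigma1).val = (Zsigma1⁻¹).val * n.val * Zsigma1.val := rfl
    rw [this, s1_val, s1_inv_val]
    exact conj_s1' n.val hn

lemma s2_mem_normalizer : Zsigma2 ∈ Subgroup.normalizer (SN : Set GL4Z) := by
  apply mem_normalizer_of_conj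
  · intro n hn
    rw [mem_SN_iff] at hn ⊢
    have : (Zsigma2 * n * Zsigma2⁻¹).val = Zsigma2.val * n.val * (Zsigma2⁻¹).val := rfl
    rw [this, s2_val, s2_inv_val]
    exact conj_s2 n.val hn
  · intro n hn
    rw [mem_SN_iff] at hn ⊢
    have : (Zsigma2⁻¹ * n * Zsigma2).val = (Zsigma2⁻¹).val * n.val * Zsigma2.val := rfl
    rw [this, s2_val, s2_inv_val]
    exact conj_s2' n.val hn

lemma sigma_le_normalizer : Subgroup.closure {Zsigma1, Zsigma2} ≤ Subgroup.normalizer (SN : Set GL4Z) := by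
  rw [Subgroup.closure_le]
  intro x hx
  rcases hx with h | h
  · subst h; exact s1_mem_normalizer
  · simp only [Set.mem_singleton_iff] at h; subst h; exact s2_mem_normalizer

lemma aZ_mem_sigma : aZ ∈ Subgroup.closure {Zsigma1, Zsigma2} := by
  have h1 : Zsigma1 ∈ Subgroup.closure {Zsigma1, Zsigma2} :=
    Subgroup.subset_closure (Set.mem_insert _ _)
  have h2 : Zsigma2 ∈ Subgroup.closure {Zsigma1, Zsigma2} :=
    Subgroup.subset_closure (Set.mem_insert_of_mem _ rfl)
  exact mul_mem (mul_mem (inv_mem h1) h2) (inv_mem h1)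

lemma bZ_mem_sigma : bZ ∈ Subgroup.closure {Zsigma1, Zsigma2} := by
  have h1 : Zsigma1 ∈ Subgroup.closure {Zsigma1, Zsigma2} :=
    Subgroup.subset_closure (Set.mem_insert _ _)
  have h2 : Zsigma2 ∈ Subgroup.closure {Zsigma1, Zsigma2} :=
    Subgroup.subset_closure (Set.mem_insert_of_mem _ rfl)
  exact mul_mem h2 (pow_mem h1 4)

lemma card_SN : Nat.card SN = 24 := by
  have h : Nat.card SN = Nat.card (↑fsN : Set GL4Z) := rfl
  rw [h, Nat.card_coe_set_eq, Set.ncard_coe_finset]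
  decide

def toGL : GL4Z →* GL (Fin 4) ℝ :=
  Units.map ((Int.castRingHom ℝ).mapMatrix : M4Z →+* Matrix (Fin 4) (Fin 4) ℝ).toMonoidHom

lemma toGL_injective : Function.Injective toGL := by
  apply Units.map_injective
  intro A B h
  exact Matrix.map_injective Int.cast_injective h

end


section
lemma toGL_rho0 : toGL Zrho0 = rho0 := by
  refine Units.ext ?_
  show (Zrho0.val).map (Int.cast : ℤ → ℝ) = rho0.val
  ext i j
  fin_cases i <;> fin_cases j <;>
    simp [Zrho0, mkZ, rho0, Matrix.map_apply, Matrix.vecHead, Matrix.vecTail]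

lemma toGL_rho1 : toGL Zrho1 = rho1 := by
  refine Units.ext ?_
  show (Zrho1.val).map (Int.cast : ℤ → ℝ) = rho1.val
  ext i j
  fin_cases i <;> fin_cases j <;>
    simp [Zrho1, mkZ, rho1, Matrix.map_apply, Matrix.vecHead, Matrix.vecTail]

lemma toGL_rho2 : toGL Zrho2 = rho2 := by
  refine Units.ext ?_
  show (Zrho2.val).map (Int.cast : ℤ → ℝ) = rho2.val
  ext i j
  fin_cases i <;> fin_cases j <;>
    simp [Zrho2, mkZ, rho2, Matrix.map_apply, Matrix.vecHead, Matrix.vecTail]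

lemma toGL_rho3 : toGL Zrho3 = rho3 := by
  refine Units.ext ?_
  show (Zrho3.val).map (Int.cast : ℤ → ℝ) = rho3.val
  ext i j
  fin_cases i <;> fin_cases j <;>
    simp [Zrho3, mkZ, rho3, Matrix.map_apply, Matrix.vecHead, Matrix.vecTail]

lemma toGL_sigma1 : toGL Zsigma1 = sigma1 := by
  rw [Zsigma1, sigma1, _root_.map_mul, _root_.map_mul, _root_.map_mul, toGL_rho0, toGL_rho1, toGL_rho2, toGL_rho3]

lemma toGL_sigma2 : toGL Zsigma2 = sigma2 := by
  rw [Zsigma2, sigma2, _root_.map_mul, _root_.map_mul, _root_.map_mul, toGL_rho1, toGL_rho2, toGL_rho3]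

lemma toGL_a : toGL aZ = aEl := by
  rw [aZ, aEl, _root_.map_mul, _root_.map_mul, _root_.map_inv, toGL_sigma1, toGL_sigma2]

lemma toGL_b : toGL bZ = bEl := by
  rw [bZ, bEl, _root_.map_mul, _root_.map_pow, toGL_sigma1, toGL_sigma2]

lemma toGL_neg_one : toGL (-1) = (-1 : GL4) := by
  refine Units.ext ?_
  show ((-1 : GL4Z).val).map (Int.cast : ℤ → ℝ) = ((-1 : GL4)).val
  ext i j
  simp [Matrix.map_apply, Matrix.one_apply, apply_ite]

lemma closure_ab : Subgroup.closure {aEl, bEl} = Subgroup.map toGL SN := by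
  rw [← closure_eq_SN, MonoidHom.map_closure]
  congr 1
  rw [Set.image_insert_eq, Set.image_singleton, toGL_a, toGL_b]

lemma closure_sigma :
    Subgroup.closure ({sigma1, sigma2} : Set GL4) =
      Subgroup.map toGL (Subgroup.closure {Zsigma1, Zsigma2}) := by
  rw [MonoidHom.map_closure]
  congr 1
  rw [Set.image_insert_eq, Set.image_singleton, toGL_sigma1, toGL_sigma2]


/-- `a³ = b³ = (ab)² = −I`, and `⟨a, b⟩` is a normal subgroup of `Γ = ⟨σ1, σ2⟩` of
order 24 (a copy of the binary tetrahedral group). -/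
theorem binary_tetrahedral_normal_subgroup :
    aEl ^ 3 = (-1 : GL4) ∧ bEl ^ 3 = (-1 : GL4) ∧ (aEl * bEl) ^ 2 = (-1 : GL4) ∧
    Subgroup.closure {aEl, bEl} ≤ Subgroup.closure ({sigma1, sigma2} : Set GL4) ∧
    ((Subgroup.closure {aEl, bEl}).subgroupOf
        (Subgroup.closure ({sigma1, sigma2} : Set GL4))).Normal ∧
    Nat.card (Subgroup.closure {aEl, bEl} : Subgroup GL4) = 24 := by
  refine ⟨?_, ?_, ?_, ?_, ?_, ?_⟩
  · rw [← toGL_a, ← _root_.map_pow, aZ_cube, toGL_neg_one]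
  · rw [← toGL_b, ← _root_.map_pow, bZ_cube, toGL_neg_one]
  · rw [← toGL_a, ← toGL_b, ← _root_.map_mul, ← _root_.map_pow, abZ_sq, toGL_neg_one]
  · rw [closure_ab, closure_sigma, ← closure_eq_SN]
    refine Subgroup.map_mono ?_
    rw [Subgroup.closure_le]
    intro x hx
    rcases hx with h | h
    · subst h; exact aZ_mem_sigma
    · simp only [Set.mem_singleton_iff] at h; subst h; exact bZ_mem_sigma
  · constructor
    intro n hn g
    rw [Subgroup.mem_subgroupOf] at hn ⊢
    rw [closure_ab] at hn ⊢
    have hg : (g : GL4) ∈ Subgroup.map toGL (Subgroup.closure {Zsigma1, Zsigma2}) := by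
      rw [← closure_sigma]; exact g.2
    obtain ⟨g', hg', hgeq⟩ := hg
    obtain ⟨n', hn', hneq⟩ := hn
    have key : g' * n' * g'⁻¹ ∈ SN :=
      (Subgroup.mem_normalizer_iff.mp (sigma_le_normalizer hg') n').mp hn'
    refine ⟨g' * n' * g'⁻¹, key, ?_⟩
    push_cast
    rw [_root_.map_mul, _root_.map_mul, _root_.map_inv, hgeq, hneq]
  · rw [closure_ab]
    rw [← Nat.card_congr (Subgroup.equivMapOfInjective SN toGL toGL_injective).toEquiv]
    exact card_SN

end
end

section
/- The Möbius–Kantor configuration 8₃ cannot be realized in the real plane: there is no injective function f : ZMod 8 → ℝ² such that for every i ∈ ZMod 8 the three points f(i), f(i+1), f(i+3) are collinear, while for every i and every j ∉ {i, i+1, i+3} the four points f(i), f(i+1), f(i+3), f(j) are not collinear. -/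
noncomputable section MKaux

/-- signed area determinant of three plane points -/
private def Dt (p q r : Fin 2 → ℝ) : ℝ :=
  (q 0 - p 0) * (r 1 - p 1) - (q 1 - p 1) * (r 0 - p 0)

private lemma eq2 {p q : Fin 2 → ℝ} (h0 : p 0 = q 0) (h1 : p 1 = q 1) : p = q := by
  funext i
  fin_cases i
  · exact h0
  · exact h1

private lemma det_eq_zero_of_collinear {p q r : Fin 2 → ℝ}
    (h : Collinear ℝ ({p, q, r} : Set (Fin 2 → ℝ))) : Dt p q r = 0 := by
  rw [collinear_iff_of_mem (show p ∈ ({p, q, r} : Set (Fin 2 → ℝ)) by simp)] at h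
  obtain ⟨v, hv⟩ := h
  obtain ⟨b, hb⟩ := hv q (by simp)
  obtain ⟨c, hc⟩ := hv r (by simp)
  have hb0 : q 0 = b * v 0 + p 0 := by rw [hb]; simp [smul_eq_mul]
  have hb1 : q 1 = b * v 1 + p 1 := by rw [hb]; simp [smul_eq_mul]
  have hc0 : r 0 = c * v 0 + p 0 := by rw [hc]; simp [smul_eq_mul]
  have hc1 : r 1 = c * v 1 + p 1 := by rw [hc]; simp [smul_eq_mul]
  simp only [Dt, hb0, hb1, hc0, hc1]
  ring

private lemma collinear_quad {p q r s : Fin 2 → ℝ} (hpq : p ≠ q)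
    (hr : Dt p q r = 0) (hs : Dt p q s = 0) :
    Collinear ℝ ({p, q, r, s} : Set (Fin 2 → ℝ)) := by
  rw [collinear_iff_of_mem (show p ∈ ({p, q, r, s} : Set (Fin 2 → ℝ)) by simp)]
  refine ⟨q - p, ?_⟩
  have hv : ¬ (q 0 - p 0 = 0 ∧ q 1 - p 1 = 0) := by
    rintro ⟨h0, h1⟩
    exact hpq (eq2 (by linarith) (by linarith)).symm
  have main : ∀ z : Fin 2 → ℝ, Dt p q z = 0 → ∃ c : ℝ, z = c • (q - p) +ᵥ p := by
    intro z hz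
    simp only [Dt] at hz
    by_cases h0 : q 0 - p 0 = 0
    · have h1 : q 1 - p 1 ≠ 0 := fun h1 => hv ⟨h0, h1⟩
      refine ⟨(z 1 - p 1) / (q 1 - p 1), eq2 ?_ ?_⟩
      · simp only [Pi.smul_apply, Pi.sub_apply, Pi.vadd_apply, vadd_eq_add, Pi.add_apply,
          smul_eq_mul]
        field_simp
        nlinarith [hz, h0]
      · simp only [Pi.smul_apply, Pi.sub_apply, Pi.vadd_apply, vadd_eq_add, Pi.add_apply,
          smul_eq_mul]
        field_simp
        ring
    · refine ⟨(z 0 - p 0) / (q 0 - p 0), eq2 ?_ ?_⟩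
      · simp only [Pi.smul_apply, Pi.sub_apply, Pi.vadd_apply, vadd_eq_add, Pi.add_apply,
          smul_eq_mul]
        field_simp
        ring
      · simp only [Pi.smul_apply, Pi.sub_apply, Pi.vadd_apply, vadd_eq_add, Pi.add_apply,
          smul_eq_mul]
        field_simp
        nlinarith [hz]
  intro z hz
  simp only [Set.mem_insert_iff, Set.mem_singleton_iff] at hz
  rcases hz with h | h | h | h
  · exact ⟨0, by rw [h]; simp⟩
  · exact main z (by rw [h]; simp [Dt]; ring)
  · exact main z (by rw [h]; exact hr)
  · exact main z (by rw [h]; exact hs)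

end MKaux


/-- The Möbius–Kantor configuration `8₃` cannot be realized by points and lines of the
real affine plane. -/
theorem mobiusKantor_not_realizable_over_R :
    ¬∃ f : ZMod 8 → (Fin 2 → ℝ), Function.Injective f ∧
      (∀ i : ZMod 8, Collinear ℝ ({f i, f (i + 1), f (i + 3)} : Set (Fin 2 → ℝ))) ∧
      (∀ i j : ZMod 8, j ∉ ({i, i + 1, i + 3} : Set (ZMod 8)) →
        ¬ Collinear ℝ ({f i, f (i + 1), f (i + 3), f j} : Set (Fin 2 → ℝ))) := by
  rintro ⟨f, hinj, hcol, hncol⟩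
  have hne : ∀ i j : ZMod 8, i ≠ j → f i ≠ f j := fun i j h hf => h (hinj hf)
  have key : ∀ i : ZMod 8, Dt (f i) (f (i + 1)) (f (i + 3)) = 0 :=
    fun i => det_eq_zero_of_collinear (hcol i)
  have k0 : Dt (f 0) (f 1) (f 3) = 0 := by
    have := key 0; rwa [show (0 : ZMod 8) + 1 = 1 by decide, show (0 : ZMod 8) + 3 = 3 by decide] at this
  have k1 : Dt (f 1) (f 2) (f 4) = 0 := by
    have := key 1; rwa [show (1 : ZMod 8) + 1 = 2 by decide, show (1 : ZMod 8) + 3 = 4 by decide] at this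
  have k2 : Dt (f 2) (f 3) (f 5) = 0 := by
    have := key 2; rwa [show (2 : ZMod 8) + 1 = 3 by decide, show (2 : ZMod 8) + 3 = 5 by decide] at this
  have k3 : Dt (f 3) (f 4) (f 6) = 0 := by
    have := key 3; rwa [show (3 : ZMod 8) + 1 = 4 by decide, show (3 : ZMod 8) + 3 = 6 by decide] at this
  have k4 : Dt (f 4) (f 5) (f 7) = 0 := by
    have := key 4; rwa [show (4 : ZMod 8) + 1 = 5 by decide, show (4 : ZMod 8) + 3 = 7 by decide] at this
  have k5 : Dt (f 5) (f 6) (f 0) = 0 := by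
    have := key 5; rwa [show (5 : ZMod 8) + 1 = 6 by decide, show (5 : ZMod 8) + 3 = 0 by decide] at this
  have k6 : Dt (f 6) (f 7) (f 1) = 0 := by
    have := key 6; rwa [show (6 : ZMod 8) + 1 = 7 by decide, show (6 : ZMod 8) + 3 = 1 by decide] at this
  have k7 : Dt (f 7) (f 0) (f 2) = 0 := by
    have := key 7; rwa [show (7 : ZMod 8) + 1 = 0 by decide, show (7 : ZMod 8) + 3 = 2 by decide] at this
  -- non-collinearity instances
  have hn02 : ¬ Collinear ℝ ({f 0, f 1, f 3, f 2} : Set (Fin 2 → ℝ)) := by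
    have := hncol 0 2 (by
      intro h
      simp only [Set.mem_insert_iff, Set.mem_singleton_iff] at h
      revert h; decide)
    rwa [show (0 : ZMod 8) + 1 = 1 by decide, show (0 : ZMod 8) + 3 = 3 by decide] at this
  have hn05 : ¬ Collinear ℝ ({f 0, f 1, f 3, f 5} : Set (Fin 2 → ℝ)) := by
    have := hncol 0 5 (by
      intro h
      simp only [Set.mem_insert_iff, Set.mem_singleton_iff] at h
      revert h; decide)
    rwa [show (0 : ZMod 8) + 1 = 1 by decide, show (0 : ZMod 8) + 3 = 3 by decide] at this
  have hn15 : ¬ Collinear ℝ ({f 1, f 2, f 4, f 5} : Set (Fin 2 → ℝ)) := by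
    have := hncol 1 5 (by
      intro h
      simp only [Set.mem_insert_iff, Set.mem_singleton_iff] at h
      revert h; decide)
    rwa [show (1 : ZMod 8) + 1 = 2 by decide, show (1 : ZMod 8) + 3 = 4 by decide] at this
  -- the base triangle is nondegenerate
  have hd : (f 1 0 - f 0 0) * (f 2 1 - f 0 1) - (f 1 1 - f 0 1) * (f 2 0 - f 0 0) ≠ 0 := by
    intro h
    exact hn02 (collinear_quad (hne 0 1 (by decide)) k0 h)
  -- normalized coordinates
  obtain ⟨X, hXdef⟩ : ∃ X : ZMod 8 → ℝ, X = fun i =>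
    ((f 2 1 - f 0 1) * (f i 0 - f 0 0) - (f 2 0 - f 0 0) * (f i 1 - f 0 1)) /
      ((f 1 0 - f 0 0) * (f 2 1 - f 0 1) - (f 1 1 - f 0 1) * (f 2 0 - f 0 0)) := ⟨_, rfl⟩
  obtain ⟨Y, hYdef⟩ : ∃ Y : ZMod 8 → ℝ, Y = fun i =>
    (-(f 1 1 - f 0 1) * (f i 0 - f 0 0) + (f 1 0 - f 0 0) * (f i 1 - f 0 1)) /
      ((f 1 0 - f 0 0) * (f 2 1 - f 0 1) - (f 1 1 - f 0 1) * (f 2 0 - f 0 0)) := ⟨_, rfl⟩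
  have hX0 : X 0 = 0 := by
    simp only [hXdef]; rw [div_eq_zero_iff]; left; ring
  have hY0 : Y 0 = 0 := by
    simp only [hYdef]; rw [div_eq_zero_iff]; left; ring
  have hX1 : X 1 = 1 := by
    simp only [hXdef]; rw [div_eq_iff hd]; ring
  have hY1 : Y 1 = 0 := by
    simp only [hYdef]; rw [div_eq_zero_iff]; left; ring
  have hX2 : X 2 = 0 := by
    simp only [hXdef]; rw [div_eq_zero_iff]; left; ring
  have hY2 : Y 2 = 1 := by
    simp only [hYdef]; rw [div_eq_iff hd]; ring
  -- transfer of the determinant along the normalization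
  have tfer : ∀ i j k : ZMod 8,
      ((f 1 0 - f 0 0) * (f 2 1 - f 0 1) - (f 1 1 - f 0 1) * (f 2 0 - f 0 0)) *
        ((X j - X i) * (Y k - Y i) - (Y j - Y i) * (X k - X i)) = Dt (f i) (f j) (f k) := by
    intro i j k
    simp only [hXdef, hYdef, Dt]
    field_simp
    ring
  have dxgen : ∀ i j k : ZMod 8, Dt (f i) (f j) (f k) = 0 →
      (X j - X i) * (Y k - Y i) - (Y j - Y i) * (X k - X i) = 0 := by
    intro i j k h
    have h2 := tfer i j k
    rw [h] at h2
    exact (mul_eq_zero.mp h2).resolve_left hd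
  have dx0 := dxgen 0 1 3 k0
  have dx1 := dxgen 1 2 4 k1
  have dx2 := dxgen 2 3 5 k2
  have dx3 := dxgen 3 4 6 k3
  have dx4 := dxgen 4 5 7 k4
  have dx5 := dxgen 5 6 0 k5
  have dx6 := dxgen 6 7 1 k6
  have dx7 := dxgen 7 0 2 k7
  rw [hX0, hY0, hX1, hY1] at dx0
  rw [hX1, hY1, hX2, hY2] at dx1
  rw [hX2, hY2] at dx2
  rw [hX0, hY0] at dx5
  rw [hX1, hY1] at dx6
  rw [hX0, hY0, hX2, hY2] at dx7
  have hY3 : Y 3 = 0 := by linear_combination dx0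
  have hY4 : Y 4 = 1 - X 4 := by linear_combination -dx1
  have hX7 : X 7 = 0 := by linear_combination -dx7
  rw [hY3] at dx2
  have hX5 : X 5 = X 3 * (1 - Y 5) := by linear_combination dx2
  -- nondegeneracy facts in normalized coordinates
  have ht : X 3 ≠ 0 := by
    intro h
    apply hne 3 0 (by decide)
    have h3 : (f 2 1 - f 0 1) * (f 3 0 - f 0 0) - (f 2 0 - f 0 0) * (f 3 1 - f 0 1) = 0 := by
      have h' := h
      simp only [hXdef] at h'
      exact (div_eq_zero_iff.mp h').resolve_right hd
    have h3' : -(f 1 1 - f 0 1) * (f 3 0 - f 0 0) + (f 1 0 - f 0 0) * (f 3 1 - f 0 1) = 0 := by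
      have h' := hY3
      simp only [hYdef] at h'
      exact (div_eq_zero_iff.mp h').resolve_right hd
    have ha : f 3 0 - f 0 0 = 0 := by
      have h5 : ((f 1 0 - f 0 0) * (f 2 1 - f 0 1) - (f 1 1 - f 0 1) * (f 2 0 - f 0 0)) *
          (f 3 0 - f 0 0) = 0 := by
        linear_combination (f 1 0 - f 0 0) * h3 + (f 2 0 - f 0 0) * h3'
      exact (mul_eq_zero.mp h5).resolve_left hd
    have hb : f 3 1 - f 0 1 = 0 := by
      have h5 : ((f 1 0 - f 0 0) * (f 2 1 - f 0 1) - (f 1 1 - f 0 1) * (f 2 0 - f 0 0)) *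
          (f 3 1 - f 0 1) = 0 := by
        linear_combination (f 1 1 - f 0 1) * h3 + (f 2 1 - f 0 1) * h3'
      exact (mul_eq_zero.mp h5).resolve_left hd
    exact eq2 (by linarith) (by linarith)
  have hy5 : Y 5 ≠ 0 := by
    intro h
    apply hn05
    refine collinear_quad (hne 0 1 (by decide)) k0 ?_
    rw [← tfer 0 1 5, hX0, hY0, hX1, hY1, h]
    ring
  have hkey : 1 - Y 5 - X 5 ≠ 0 := by
    intro h
    apply hn15
    refine collinear_quad (hne 1 2 (by decide)) k1 ?_
    rw [← tfer 1 2 5, hX1, hY1, hX2, hY2]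
    linear_combination ((f 1 0 - f 0 0) * (f 2 1 - f 0 1) - (f 1 1 - f 0 1) * (f 2 0 - f 0 0)) * h
  -- the slope parameter of the line through the origin
  obtain ⟨l, hl⟩ : ∃ l : ℝ, l = Y 6 / Y 5 := ⟨_, rfl⟩
  have hY6 : Y 6 = l * Y 5 := by rw [hl, div_mul_cancel₀ _ hy5]
  have hX6 : X 6 = l * X 5 := by
    have h5 : Y 5 * (l * X 5 - X 6) = 0 := by linear_combination dx5 - X 5 * hY6
    have := (mul_eq_zero.mp h5).resolve_left hy5
    linarith
  rw [hY3, hY4, hY6, hX6, hX5] at dx3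
  rw [hY4, hX7, hX5] at dx4
  rw [hX7, hY6, hX6, hX5] at dx6
  rw [hX5] at hkey
  -- final algebraic contradiction
  have e46 : X 4*Y 5 - X 4*Y 5*l - X 3 + X 3*Y 5 + X 3*Y 5*l - X 3*Y 5*Y 5*l + X 3*X 4
      - X 3*X 4*Y 5 - X 3*X 4*Y 5*l + X 3*X 4*Y 5*Y 5*l + X 3*X 3*l - 2*X 3*X 3*Y 5*l
      + X 3*X 3*Y 5*Y 5*l - X 3*X 3*X 4*l + 2*X 3*X 3*X 4*Y 5*l - X 3*X 3*X 4*Y 5*Y 5*l = 0 := by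
    linear_combination (X 3 * (1 - Y 5) - X 4) * dx6 - (l * (X 3) * (1 - Y 5) - 1) * dx4
  have hmain : X 3 * Y 5 *
      ((-(1 - Y 5 + Y 5 ^ 2) + X 3 * (1 - Y 5) * (1 - 2 * Y 5) - X 3 ^ 2 * (1 - Y 5) ^ 2) * l ^ 2
        + (1 + Y 5 + X 3 * (1 - Y 5)) * l - 1) = 0 := by
    linear_combination
      ((Y 5) * l + (X 3) * l - X 3 - (X 3) * (Y 5) * l) * e46
      - ((Y 5) * (1 - l) + (X 3) * (1 - Y 5)
          - (X 3) * l * (1 - Y 5) * (Y 5 + X 3 * (1 - Y 5))) * dx3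
  have hQ : (-(1 - Y 5 + Y 5 ^ 2) + X 3 * (1 - Y 5) * (1 - 2 * Y 5) - X 3 ^ 2 * (1 - Y 5) ^ 2) * l ^ 2
      + (1 + Y 5 + X 3 * (1 - Y 5)) * l - 1 = 0 :=
    (mul_eq_zero.mp hmain).resolve_left (mul_ne_zero ht hy5)
  have hsq : (2 * (-(1 - Y 5 + Y 5 ^ 2) + X 3 * (1 - Y 5) * (1 - 2 * Y 5)
        - X 3 ^ 2 * (1 - Y 5) ^ 2) * l + (1 + Y 5 + X 3 * (1 - Y 5))) ^ 2
      = -3 * (1 - Y 5 - X 3 * (1 - Y 5)) ^ 2 := by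
    linear_combination (4 * (-(1 - Y 5 + Y 5 ^ 2) + X 3 * (1 - Y 5) * (1 - 2 * Y 5)
      - X 3 ^ 2 * (1 - Y 5) ^ 2)) * hQ
  have hpos : 0 < (1 - Y 5 - X 3 * (1 - Y 5)) ^ 2 :=
    lt_of_le_of_ne (sq_nonneg _) (Ne.symm (pow_ne_zero 2 hkey))
  linarith [hsq, hpos, sq_nonneg (2 * (-(1 - Y 5 + Y 5 ^ 2) + X 3 * (1 - Y 5) * (1 - 2 * Y 5)
      - X 3 ^ 2 * (1 - Y 5) ^ 2) * l + (1 + Y 5 + X 3 * (1 - Y 5)))]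
end
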